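/- Let A ∈ ℝ^{n×n}, B ∈ ℝ^{n×m}, C ∈ ℝ^{m×n}, D ∈ ℝ^{m×m} with D = Dᵀ, and suppose there exists a real symmetric matrix P ⪰ 0 such that the (n+m)×(n+m) real symmetric block matrix [[PA + AᵀP, PB − AᵀCᵀ], [BᵀP − CA, −(CB + BᵀCᵀ)]] is negative semidefinite. Then the transfer function R(s) = C(sI − A)⁻¹B + D satisfies j(R(jω) − R(jω)ᴴ) ⪰ 0 for every ω ∈ (0,∞) such that jω is not an eigenvalue of A. -/

import Mathlib

open Matrix Filter Topology ComplexOrder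

/-- The (complex) eigenvalues of a real square matrix. -/
noncomputable def eigs {k : Type*} [Fintype k] [DecidableEq k] (A : Matrix k k ℝ) : Set ℂ :=
  spectrum ℂ (A.map Complex.ofReal)

/-- A real square matrix is Hurwitz if all of its (complex) eigenvalues have negative real
part. -/
noncomputable def IsHurwitz {k : Type*} [Fintype k] [DecidableEq k] (A : Matrix k k ℝ) : Prop :=
  ∀ μ ∈ eigs A, μ.re < 0

/-- Transfer function `R(s) = C (sI - A)⁻¹ B + D` of a real state-space system, as a
complex matrix. -/
noncomputable def tf {n m : ℕ} (A : Matrix (Fin n) (Fin n) ℝ) (B : Matrix (Fin n) (Fin m) ℝ)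
    (C : Matrix (Fin m) (Fin n) ℝ) (D : Matrix (Fin m) (Fin m) ℝ) (s : ℂ) :
    Matrix (Fin m) (Fin m) ℂ :=
  C.map (Complex.ofReal) * (s • (1 : Matrix (Fin n) (Fin n) ℂ) - A.map Complex.ofReal)⁻¹ *
      B.map Complex.ofReal + D.map Complex.ofReal

/-- A state-space realization `(A,B,C,D)` is minimal if the controllability matrix and the
observability matrix both have rank `n`. -/
def IsMinimal {n m : ℕ} (A : Matrix (Fin n) (Fin n) ℝ) (B : Matrix (Fin n) (Fin m) ℝ)
    (C : Matrix (Fin m) (Fin n) ℝ) : Prop :=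
  (Matrix.of fun (i : Fin n) (p : Fin n × Fin m) => (A ^ (p.1 : ℕ) * B) i p.2).rank = n ∧
  (Matrix.of fun (p : Fin n × Fin m) (i : Fin n) => (C * A ^ (p.1 : ℕ)) p.2 i).rank = n

/-- The system `(A,B,C,D)` is negative imaginary (NI). -/
noncomputable def IsNI {n m : ℕ} (A : Matrix (Fin n) (Fin n) ℝ) (B : Matrix (Fin n) (Fin m) ℝ)
    (C : Matrix (Fin m) (Fin n) ℝ) (D : Matrix (Fin m) (Fin m) ℝ) : Prop :=
  (∀ μ ∈ eigs A, μ ≠ 0 ∧ μ.re ≤ 0) ∧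
  (∀ ω : ℝ, 0 < ω → (Complex.I * ω) ∉ eigs A →
    (Complex.I • (tf A B C D (Complex.I * ω) - (tf A B C D (Complex.I * ω))ᴴ)).PosSemidef) ∧
  (∀ ω : ℝ, 0 < ω → (Complex.I * ω) ∈ eigs A →
    ∃ K : Matrix (Fin m) (Fin m) ℂ,
      Tendsto (fun s : ℂ => (s - Complex.I * ω) • Complex.I • tf A B C D s)
        (𝓝[≠] (Complex.I * ω)) (𝓝 K) ∧ K.PosSemidef)

/-- The system `(A,B,C,D)` is strictly negative imaginary (SNI). -/
noncomputable def IsSNI {n m : ℕ} (A : Matrix (Fin n) (Fin n) ℝ) (B : Matrix (Fin n) (Fin m) ℝ)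
    (C : Matrix (Fin m) (Fin n) ℝ) (D : Matrix (Fin m) (Fin m) ℝ) : Prop :=
  IsHurwitz A ∧
  (∀ ω : ℝ, 0 < ω →
    (Complex.I • (tf A B C D (Complex.I * ω) - (tf A B C D (Complex.I * ω))ᴴ)).PosDef)



section Helpers

variable {k l p : Type*} [Fintype k] [Fintype l] [Fintype p]

lemma mapC_mul (M : Matrix k l ℝ) (N : Matrix l p ℝ) :
    (M * N).map Complex.ofReal = M.map Complex.ofReal * N.map Complex.ofReal := by
  ext i j
  simp [Matrix.mul_apply, Matrix.map_apply]

lemma mapC_add (M N : Matrix k l ℝ) :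
    (M + N).map Complex.ofReal = M.map Complex.ofReal + N.map Complex.ofReal := by
  ext i j; simp

lemma mapC_sub (M N : Matrix k l ℝ) :
    (M - N).map Complex.ofReal = M.map Complex.ofReal - N.map Complex.ofReal := by
  ext i j; simp

lemma mapC_neg (M : Matrix k l ℝ) :
    (-M).map Complex.ofReal = -(M.map Complex.ofReal) := by
  ext i j; simp

lemma mapC_ct (M : Matrix k l ℝ) :
    (M.map Complex.ofReal)ᴴ = Mᵀ.map Complex.ofReal := by
  ext i j; simp [Matrix.conjTranspose_apply, Complex.conj_ofReal]

lemma psd_map [DecidableEq k] (M : Matrix k k ℝ) (h : M.PosSemidef) :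
    (M.map Complex.ofReal).PosSemidef := by
  obtain ⟨r, v, hv⟩ := Matrix.posSemidef_iff_eq_sum_vecMulVec.mp h
  have hct : M.map Complex.ofReal = ∑ i, vecMulVec (fun a => (v i a : ℂ))
      (star fun a => (v i a : ℂ)) := by
    subst hv; ext a b; simp [Matrix.sum_apply, vecMulVec_apply]
  rw [hct]
  exact Matrix.posSemidef_iff_eq_sum_vecMulVec.mpr ⟨r, _, rfl⟩

lemma psd_smul (c : ℝ) (hc : 0 ≤ c) (N : Matrix k k ℂ) (h : N.PosSemidef) :
    ((c : ℂ) • N).PosSemidef := by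
  rw [Matrix.posSemidef_iff_dotProduct_mulVec] at h ⊢
  constructor
  · simp [Matrix.IsHermitian, Matrix.conjTranspose_smul, Complex.conj_ofReal, h.1.eq]
  · intro x
    have h2 := h.2 x
    have : star x ⬝ᵥ ((c : ℂ) • N) *ᵥ x = (c : ℂ) * (star x ⬝ᵥ N *ᵥ x) := by
      simp [Matrix.smul_mulVec, dotProduct_smul, smul_eq_mul]
    rw [this]
    exact mul_nonneg (by exact_mod_cast hc) h2

end Helpers
/-- Sufficiency direction of the modified Negative Imaginary Lemma (LMI form). -/
theorem modified_ni_lemma_lmi_sufficiency {n m : ℕ}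
    (A : Matrix (Fin n) (Fin n) ℝ) (B : Matrix (Fin n) (Fin m) ℝ)
    (C : Matrix (Fin m) (Fin n) ℝ) (D : Matrix (Fin m) (Fin m) ℝ)
    (hD : D = Dᵀ) (P : Matrix (Fin n) (Fin n) ℝ) (hP : P.PosSemidef)
    (hLMI : (-(Matrix.fromBlocks (P * A + Aᵀ * P) (P * B - Aᵀ * Cᵀ)
        (Bᵀ * P - C * A) (-(C * B + Bᵀ * Cᵀ)))).PosSemidef) :
    ∀ ω : ℝ, 0 < ω → (Complex.I * ω) ∉ eigs A →
      (Complex.I • (tf A B C D (Complex.I * ω) - (tf A B C D (Complex.I * ω))ᴴ)).PosSemidef := by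
  intro ω hω hspec
  have hω0 : (ω : ℂ) ≠ 0 := by exact_mod_cast hω.ne'
  set s : ℂ := Complex.I * ω with hs
  set Ac := A.map Complex.ofReal with hAc
  set Bc := B.map Complex.ofReal with hBc
  set Cc := C.map Complex.ofReal with hCc
  set Dc := D.map Complex.ofReal with hDc
  set Atc := Aᵀ.map Complex.ofReal with hAtc
  set Btc := Bᵀ.map Complex.ofReal with hBtc
  set Ctc := Cᵀ.map Complex.ofReal with hCtc
  set Pc := P.map Complex.ofReal with hPc
  -- invertibility of sI - A
  have hunit : IsUnit (s • (1 : Matrix (Fin n) (Fin n) ℂ) - Ac) := by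
    rw [eigs, spectrum.mem_iff, not_not] at hspec
    rwa [Algebra.algebraMap_eq_smul_one] at hspec
  have hdet : IsUnit (s • (1 : Matrix (Fin n) (Fin n) ℂ) - Ac).det :=
    (Matrix.isUnit_iff_isUnit_det _).mp hunit
  set Φ := (s • (1 : Matrix (Fin n) (Fin n) ℂ) - Ac)⁻¹ with hΦ
  set G := Φ * Bc with hG
  have h1 : (s • (1 : Matrix (Fin n) (Fin n) ℂ) - Ac) * Φ = 1 := Matrix.mul_nonsing_inv _ hdet
  clear_value s Ac Bc Cc Dc Atc Btc Ctc Pc Φ G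
  have hAG : Ac * G = s • G - Bc := by
    have h2 : (s • (1 : Matrix (Fin n) (Fin n) ℂ) - Ac) * G = Bc := by
      rw [hG, ← Matrix.mul_assoc, h1, Matrix.one_mul]
    have h3 : s • G - Ac * G = Bc := by
      rw [← h2, Matrix.sub_mul, Matrix.smul_mul, Matrix.one_mul]
    rw [← h3]; abel
  have hstar : star s = -s := by
    rw [hs]
    simp [Complex.star_def, Complex.conj_ofReal]
  have hAcH : Acᴴ = Atc := by rw [hAc, hAtc]; exact mapC_ct A
  have hBcH : Bcᴴ = Btc := by rw [hBc, hBtc]; exact mapC_ct B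
  have hCcH : Ccᴴ = Ctc := by rw [hCc, hCtc]; exact mapC_ct C
  have hGA : Gᴴ * Atc = -(s • Gᴴ) - Btc := by
    calc Gᴴ * Atc = (Ac * G)ᴴ := by rw [Matrix.conjTranspose_mul, hAcH]
      _ = (s • G - Bc)ᴴ := by rw [hAG]
      _ = -(s • Gᴴ) - Btc := by
          rw [Matrix.conjTranspose_sub, Matrix.conjTranspose_smul, hstar, hBcH, neg_smul]
  have e1 : Gᴴ * (Pc * (Ac * G)) = s • (Gᴴ * (Pc * G)) - Gᴴ * (Pc * Bc) := by
    rw [hAG]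
    simp only [Matrix.mul_sub, Matrix.mul_smul]
  have e2 : Gᴴ * (Atc * (Pc * G)) = -(s • (Gᴴ * (Pc * G))) - Btc * (Pc * G) := by
    rw [← Matrix.mul_assoc, hGA]
    simp only [Matrix.sub_mul, Matrix.neg_mul, Matrix.smul_mul, Matrix.mul_assoc]
  have e3 : Cc * (Ac * G) = s • (Cc * G) - Cc * Bc := by
    rw [hAG]
    simp only [Matrix.mul_sub, Matrix.mul_smul]
  have e4 : Gᴴ * (Atc * Ctc) = -(s • (Gᴴ * Ctc)) - Btc * Ctc := by
    rw [← Matrix.mul_assoc, hGA]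
    simp only [Matrix.sub_mul, Matrix.neg_mul, Matrix.smul_mul]
  -- the complex LMI matrix
  set Mc := Matrix.fromBlocks (Pc * Ac + Atc * Pc) (Pc * Bc - Atc * Ctc)
      (Btc * Pc - Cc * Ac) (-(Cc * Bc + Btc * Ctc)) with hMcdef
  clear_value Mc
  have hMc : (Matrix.fromBlocks (P * A + Aᵀ * P) (P * B - Aᵀ * Cᵀ)
      (Bᵀ * P - C * A) (-(C * B + Bᵀ * Cᵀ))).map Complex.ofReal = Mc := by
    rw [hMcdef, Matrix.fromBlocks_map]
    simp only [mapC_add, mapC_sub, mapC_neg, mapC_mul, ← hAc, ← hBc, ← hCc, ← hAtc, ← hBtc,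
      ← hCtc, ← hPc]
  have hMcPSD : (-Mc).PosSemidef := by
    have h5 := psd_map _ hLMI
    rwa [mapC_neg, hMc] at h5
  set X := Matrix.fromRows G (1 : Matrix (Fin m) (Fin m) ℂ) with hX
  clear_value X
  have hXH : Xᴴ = Matrix.fromCols Gᴴ 1 := by
    rw [hX, Matrix.conjTranspose_fromRows_eq_fromCols_conjTranspose, Matrix.conjTranspose_one]
  have key : Xᴴ * Mc * X = s • (Gᴴ * Ctc) - s • (Cc * G) := by
    rw [hXH, hMcdef, hX, Matrix.fromCols_mul_fromBlocks, Matrix.fromCols_mul_fromRows]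
    simp only [Matrix.one_mul, Matrix.mul_one, Matrix.mul_add, Matrix.add_mul,
      Matrix.mul_sub, Matrix.sub_mul, Matrix.mul_assoc]
    rw [e1, e2, e3, e4]
    abel
  -- transfer function identity
  have htf1 : tf A B C D s = Cc * G + Dc := by
    unfold tf
    rw [← hAc, ← hBc, ← hCc, ← hDc, ← hΦ, Matrix.mul_assoc, ← hG]
  have htf : tf A B C D s - (tf A B C D s)ᴴ = Cc * G - Gᴴ * Ctc := by
    rw [htf1, Matrix.conjTranspose_add, Matrix.conjTranspose_mul, hCcH]
    have hDcH : Dcᴴ = Dc := by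
      rw [hDc, mapC_ct, ← hD]
    rw [hDcH]
    abel
  have hXMX : Xᴴ * (-Mc) * X = s • (Cc * G) - s • (Gᴴ * Ctc) := by
    rw [Matrix.mul_neg, Matrix.neg_mul, key, neg_sub]
  have hfin : Complex.I • (tf A B C D s - (tf A B C D s)ᴴ)
      = ((ω⁻¹ : ℝ) : ℂ) • (Xᴴ * (-Mc) * X) := by
    rw [htf, hXMX, ← smul_sub, smul_smul]
    congr 1
    rw [hs]
    push_cast
    field_simp
  rw [hfin]
  exact psd_smul ω⁻¹ (inv_nonneg.mpr hω.le) _ (hMcPSD.conjTranspose_mul_mul_same X)
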